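/- Let (A, •, ⟨ , ⟩) be a flat pseudo-Euclidean left Leibniz algebra with Levi-Civita products (⋆, ∘), and let Leib(A) = span{u•v + v•u}. Then for every u ∈ Leib(A) all multiplication operators vanish: L⋆_u = L∘_u = R⋆_u = R∘_u = 0; consequently both Leib(A) and its orthogonal complement Leib(A)^⊥ are two-sided ideals for both products ⋆ and ∘. -/
import Mathlib

/-- In a flat pseudo-Euclidean left Leibniz algebra, all multiplication operators
of the Levi-Civita products vanish on Leib(A), and Leib(A) and Leib(A)^⊥ are
two-sided ideals for both Levi-Civita products. -/
theorem flat_leibnizIdeal_LeviCivita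
    {K A : Type*} [Field K] [AddCommGroup A] [Module K A]
    (htwo : (2 : K) ≠ 0)
    (mul starP circP : A →ₗ[K] A →ₗ[K] A)
    (B : LinearMap.BilinForm K A)
    (hLL : ∀ u v w : A, mul u (mul v w) = mul (mul u v) w + mul v (mul u w))
    (hsymm : ∀ u v : A, B u v = B v u)
    (hnd : ∀ v : A, (∀ u : A, B u v = 0) → v = 0)
    (htor : ∀ u v : A, mul u v = starP u v + circP v u)
    (hcomp : ∀ u v w : A, B (starP u v) w = B v (circP u w))
    (hflat1 : ∀ u v : A, starP (mul u v) = starP u ∘ₗ starP v - starP v ∘ₗ starP u)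
    (hflat2 : ∀ u v : A,
      starP u ∘ₗ starP v = -(starP u ∘ₗ circP v) ∧
      starP u ∘ₗ starP v = -(circP u ∘ₗ starP v) ∧
      starP u ∘ₗ starP v = circP u ∘ₗ circP v)
    (Leib : Submodule K A)
    (hLeib : Leib = Submodule.span K {x : A | ∃ u v : A, x = mul u v + mul v u}) :
    (∀ u ∈ Leib, starP u = 0 ∧ circP u = 0 ∧ ∀ v : A, starP v u = 0 ∧ circP v u = 0) ∧
    (∀ x ∈ Leib, ∀ a : A,
      starP x a ∈ Leib ∧ starP a x ∈ Leib ∧ circP x a ∈ Leib ∧ circP a x ∈ Leib) ∧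
    (∀ x ∈ B.orthogonal Leib, ∀ a : A,
      starP x a ∈ B.orthogonal Leib ∧ starP a x ∈ B.orthogonal Leib ∧
      circP x a ∈ B.orthogonal Leib ∧ circP a x ∈ B.orthogonal Leib) := by
  -- adjoint of right multiplication: B (circP v u) w = B u (starP v w)
  have hcomp' : ∀ u v w : A, B (circP v u) w = B u (starP v w) := by
    intro u v w
    rw [hsymm, ← hcomp, hsymm]
  -- key computation: B (mul u v) (circP c d) in terms of starP only
  have hBmul : ∀ u v c d : A,
      B (mul u v) (circP c d)
        = B v (starP u (starP c d)) - B u (starP v (starP c d)) := by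
    intro u v c d
    have h1 : circP u (circP c d) = starP u (starP c d) := by
      have := LinearMap.congr_fun (hflat2 u c).2.2 d
      simpa [LinearMap.comp_apply] using this.symm
    have h2 : starP v (circP c d) = -(starP v (starP c d)) := by
      have h := LinearMap.congr_fun (hflat2 v c).1 d
      simp only [LinearMap.comp_apply, LinearMap.neg_apply] at h
      rw [h, neg_neg]
    rw [htor u v, map_add, LinearMap.add_apply, hcomp, hcomp', h1, h2, map_neg]
    ring
  -- main lemma by span induction
  have key : ∀ u ∈ Leib, starP u = 0 ∧ mul u = 0 ∧ ∀ c d : A, B u (circP c d) = 0 := by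
    intro u hu
    rw [hLeib] at hu
    induction hu using Submodule.span_induction with
    | mem x hx =>
      obtain ⟨a, b, rfl⟩ := hx
      refine ⟨?_, ?_, ?_⟩
      · rw [map_add, hflat1, hflat1]; abel
      · ext w
        have h1 : mul (mul a b) w = mul a (mul b w) - mul b (mul a w) :=
          eq_sub_of_add_eq (hLL a b w).symm
        have h2 : mul (mul b a) w = mul b (mul a w) - mul a (mul b w) :=
          eq_sub_of_add_eq (hLL b a w).symm
        simp only [map_add, LinearMap.add_apply, LinearMap.zero_apply, h1, h2]
        abel
      · intro c d
        rw [map_add, LinearMap.add_apply, hBmul, hBmul]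
        ring
    | zero => simp
    | add x y _ _ hx hy =>
      refine ⟨by rw [map_add, hx.1, hy.1, add_zero],
        by rw [map_add, hx.2.1, hy.2.1, add_zero], fun c d => by
          rw [map_add, LinearMap.add_apply, hx.2.2, hy.2.2, add_zero]⟩
    | smul t x _ hx =>
      refine ⟨by rw [map_smul, hx.1, smul_zero],
        by rw [map_smul, hx.2.1, smul_zero], fun c d => by
          rw [map_smul, LinearMap.smul_apply, hx.2.2, smul_zero]⟩
  -- full part 1
  have part1 : ∀ u ∈ Leib, starP u = 0 ∧ circP u = 0 ∧ ∀ v : A, starP v u = 0 ∧ circP v u = 0 := by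
    intro u hu
    obtain ⟨hs, hm, hB⟩ := key u hu
    have hcirc : circP u = 0 := by
      ext w
      refine hnd _ fun t => ?_
      rw [← hcomp, hs]
      simp
    refine ⟨hs, hcirc, fun v => ?_⟩
    constructor
    · refine hnd _ fun t => ?_
      rw [hsymm, hcomp]
      exact hB v t
    · have := htor u v
      rw [hs, hm] at this
      simpa using this.symm
  refine ⟨part1, ?_, ?_⟩
  · intro x hx a
    obtain ⟨hs, hc, hr⟩ := part1 x hx
    simp [hs, hc, (hr a).1, (hr a).2, Submodule.zero_mem]
  · intro x _ a
    have mem : ∀ y : A, (∀ n ∈ Leib, B n y = 0) → y ∈ B.orthogonal Leib := by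
      intro y h
      intro n hn
      exact h n hn
    refine ⟨mem _ fun n hn => ?_, mem _ fun n hn => ?_, mem _ fun n hn => ?_,
      mem _ fun n hn => ?_⟩
    · rw [hsymm, hcomp, ((part1 n hn).2.2 x).2]
      simp
    · rw [hsymm, hcomp, ((part1 n hn).2.2 a).2]
      simp
    · rw [← hcomp, ((part1 n hn).2.2 x).1]
      simp
    · rw [← hcomp, ((part1 n hn).2.2 a).1]
      simp
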